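/- Let R be an F-finite F-pure Noetherian local or graded ring of characteristic p, and let {I_n} be an F-pure filtration. Then depth(I_n) ≤ depth(I_{⌈n/p^e⌉}) for all n, e ≥ 0. -/

import Mathlib

set_option maxHeartbeats 1000000
set_option synthInstance.maxHeartbeats 400000

noncomputable section

section Core
variable {R : Type*} [CommRing R]

/-- A Frobenius splitting: identifying `R^{1/p}` with `R` via `p`-th roots, an additive map
`φ : R^{1/p} → R` which is `R`-linear (`φ(a^p b^{1/p}) = a φ(b^{1/p})`) and splits the
inclusion `R ⊆ R^{1/p}` (equivalently `φ 1 = 1`). -/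
def IsFrobeniusSplitting (p : ℕ) (φ : R → R) : Prop :=
  (∀ a b : R, φ (a + b) = φ a + φ b) ∧ (∀ a b : R, φ (a ^ p * b) = a * φ b) ∧ φ 1 = 1

/-- A ring is `F`-split (`F`-pure in the `F`-finite case) if Frobenius splits. -/
def IsFSplitRing (p : ℕ) (A : Type*) [CommRing A] : Prop :=
  ∃ φ : A → A, IsFrobeniusSplitting p φ

/-- `A` is `F`-finite: `A` is a finitely generated module over its subring of `p`-th powers. -/
def IsFFiniteRing (p : ℕ) (A : Type*) [CommRing A] : Prop :=
  ∃ (n : ℕ) (g : Fin n → A), ∀ x : A, ∃ c : Fin n → A, x = ∑ i, c i ^ p * g i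

/-- A filtration of ideals. -/
def IsIdealFiltration (I : ℕ → Ideal R) : Prop :=
  I 0 = ⊤ ∧ (∀ n, I (n + 1) ≤ I n) ∧ ∀ m n, I m * I n ≤ I (m + n)

/-- An `F`-pure filtration. -/
def IsFPureFiltration (p : ℕ) (I : ℕ → Ideal R) : Prop :=
  IsIdealFiltration I ∧ ∃ φ : R → R, IsFrobeniusSplitting p φ ∧
    ∀ n : ℕ, ∀ x ∈ I (n * p + 1), φ x ∈ I (n + 1)

/-- The Frobenius power `J^{[p]}` of an ideal. -/
def Ideal.frobPow (p : ℕ) (J : Ideal R) : Ideal R :=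
  Ideal.span ((fun a => a ^ p) '' (J : Set R))

/-- The `n`-th symbolic power `I^{(n)}`. -/
def Ideal.symbPow (I : Ideal R) (n : ℕ) : Ideal R where
  carrier := {r : R | ∃ s : R, (∀ P ∈ I.minimalPrimes, s ∉ P) ∧ s * r ∈ I ^ n}
  zero_mem' :=
    ⟨1, fun P hP h1 => hP.1.1.ne_top ((Ideal.eq_top_iff_one P).mpr h1), by simp⟩
  add_mem' := by
    rintro a b ⟨s, hs, hsa⟩ ⟨t, ht, htb⟩
    refine ⟨s * t, fun P hP hst => ((hP.1.1.mem_or_mem hst).elim (hs P hP) (ht P hP)), ?_⟩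
    have h1 : (s * t) * (a + b) = t * (s * a) + s * (t * b) := by ring
    rw [h1]
    exact (I ^ n).add_mem (Ideal.mul_mem_left _ _ hsa) (Ideal.mul_mem_left _ _ htb)
  smul_mem' := by
    rintro c x ⟨s, hs, hsx⟩
    refine ⟨s, hs, ?_⟩
    have h1 : s * (c • x) = c * (s * x) := by
      simp only [smul_eq_mul]; ring
    rw [h1]
    exact Ideal.mul_mem_left _ _ hsx

end Core

section MyAux
open RingTheory.Sequence Submodule Function

section CeilDiv

lemma myCeilDiv_le_iff {q n m : ℕ} (hq : 0 < q) : (n + q - 1) / q ≤ m ↔ n ≤ m * q := by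
  rw [Nat.div_le_iff_le_mul_add_pred hq, mul_comm m q]
  omega

lemma myLe_ceilDiv_mul {q n : ℕ} (hq : 0 < q) : n ≤ (n + q - 1) / q * q :=
  (myCeilDiv_le_iff hq).mp le_rfl

lemma myCeilDiv_ceilDiv {a b n : ℕ} (ha : 0 < a) (hb : 0 < b) :
    ((n + a - 1) / a + b - 1) / b = (n + a * b - 1) / (a * b) := by
  have hab : 0 < a * b := Nat.mul_pos ha hb
  apply le_antisymm
  · rw [myCeilDiv_le_iff hb, myCeilDiv_le_iff ha]
    calc n ≤ (n + a * b - 1) / (a * b) * (a * b) := myLe_ceilDiv_mul hab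
      _ = (n + a * b - 1) / (a * b) * b * a := by ring
  · rw [myCeilDiv_le_iff hab]
    calc n ≤ (n + a - 1) / a * a := myLe_ceilDiv_mul ha
      _ ≤ ((n + a - 1) / a + b - 1) / b * b * a :=
          Nat.mul_le_mul_right a (myLe_ceilDiv_mul hb)
      _ = ((n + a - 1) / a + b - 1) / b * (a * b) := by ring

end CeilDiv

section Retract

variable {R : Type*} [CommRing R]

lemma myIsWeaklyRegular_of_retract (rs : List R) :
    ∀ {M N : Type*} [AddCommGroup M] [Module R M] [AddCommGroup N] [Module R N]
      (i : N →ₗ[R] M) (π : M →ₗ[R] N), π ∘ₗ i = LinearMap.id →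
      IsWeaklyRegular M rs → IsWeaklyRegular N rs := by
  induction rs with
  | nil => intros; exact IsWeaklyRegular.nil _ _
  | cons r rs ih =>
    intro M N _ _ _ _ i π hπi h
    rw [isWeaklyRegular_cons_iff] at h ⊢
    obtain ⟨h1, h2⟩ := h
    have hinj : Function.Injective i :=
      Function.LeftInverse.injective (g := π) fun x => DFunLike.congr_fun hπi x
    refine ⟨h1.of_injective i hinj, ?_⟩
    refine ih (QuotSMulTop.map r i) (QuotSMulTop.map r π) ?_ h2
    rw [← QuotSMulTop.map_comp, hπi, QuotSMulTop.map_id]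

lemma myIsWeaklyRegular_of_ses (rs : List R) :
    ∀ {A B C : Type*} [AddCommGroup A] [Module R A] [AddCommGroup B] [Module R B]
      [AddCommGroup C] [Module R C]
      (f : A →ₗ[R] B) (g : B →ₗ[R] C), Function.Injective f → Function.Surjective g →
      Function.Exact f g → IsWeaklyRegular A rs → IsWeaklyRegular C rs →
      IsWeaklyRegular B rs := by
  induction rs with
  | nil => intros; exact IsWeaklyRegular.nil _ _
  | cons r rs ih =>
    intro A B C _ _ _ _ _ _ f g hf hg hfg hA hC
    rw [isWeaklyRegular_cons_iff] at hA hC ⊢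
    have hrB : IsSMulRegular B r := by
      intro x y hxy
      have hxy' : r • x = r • y := hxy
      have h0 : r • (x - y) = 0 := by
        rw [smul_sub, sub_eq_zero]; exact hxy'
      have hg0 : g (x - y) = 0 :=
        hC.1 (show r • g (x - y) = r • 0 by rw [← map_smul, h0, map_zero, smul_zero])
      obtain ⟨a, ha⟩ := (hfg (x - y)).mp hg0
      have hfa : f (r • a) = 0 := by rw [map_smul, ha, h0]
      have h1 : r • a = 0 := hf (show f (r • a) = f 0 by rw [hfa, map_zero])
      have ha0 : a = 0 := hA.1 (show r • a = r • 0 by rw [h1, smul_zero])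
      have hxy0 : x - y = 0 := by rw [← ha, ha0, map_zero]
      exact sub_eq_zero.mp hxy0
    refine ⟨hrB, ?_⟩
    have hinjq : Function.Injective (QuotSMulTop.map r f) := by
      have hex : Function.Exact (0 : PUnit.{1} →ₗ[R] A) f := by
        rw [LinearMap.exact_iff, LinearMap.range_zero, LinearMap.ker_eq_bot]
        exact hf
      have := QuotSMulTop.map_first_exact_on_four_term_exact_of_isSMulRegular_last
        (r := r) hex hfg hC.1
      rw [map_zero] at this
      rw [← LinearMap.ker_eq_bot, this.linearMap_ker_eq, LinearMap.range_zero]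
    exact ih (QuotSMulTop.map r f) (QuotSMulTop.map r g) hinjq
      (QuotSMulTop.map_surjective r hg) (QuotSMulTop.map_exact r hfg hg) hA.2 hC.2

end Retract

open scoped Pointwise in
lemma mymem_rsmul {R : Type*} [CommRing R] {M : Type*} [AddCommGroup M] [Module R M]
    {r : R} {x : M} :
    x ∈ (r • ⊤ : Submodule R M) ↔ ∃ y : M, r • y = x := by
  rw [show (r • ⊤ : Submodule R M)
        = Submodule.map (DistribMulAction.toLinearMap R M r) ⊤ from rfl,
    Submodule.mem_map]
  simp [DistribMulAction.toLinearMap]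

section Pow

variable {R : Type*} [CommRing R] {M : Type*} [AddCommGroup M] [Module R M]

open scoped Pointwise

lemma myQuot_pow {r : R} (hr : IsSMulRegular M r) (rs : List R)
    (h : IsWeaklyRegular (QuotSMulTop r M) rs) :
    ∀ k, IsWeaklyRegular (QuotSMulTop (r ^ (k + 1)) M) rs
  | 0 => by
    have e : QuotSMulTop (r ^ 1) M ≃ₗ[R] QuotSMulTop r M :=
      Submodule.quotEquivOfEq _ _ (by rw [pow_one])
    exact (e.isWeaklyRegular_congr rs).mpr h
  | (k + 1) => by
    have ihk := myQuot_pow hr rs h k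
    have hps : r ^ (k + 2) = r * r ^ (k + 1) := pow_succ' r (k + 1)
    have hcomap1 : (r ^ (k + 1) • ⊤ : Submodule R M) ≤
        (r ^ (k + 2) • ⊤ : Submodule R M).comap (LinearMap.lsmul R M r) := by
      intro x hx
      obtain ⟨y, rfl⟩ := mymem_rsmul.mp hx
      refine Submodule.mem_comap.mpr (mymem_rsmul.mpr ⟨y, ?_⟩)
      simp only [LinearMap.lsmul_apply, smul_smul, hps]
    have hcomap2 : (r ^ (k + 2) • ⊤ : Submodule R M) ≤
        (r • ⊤ : Submodule R M).comap (LinearMap.id : M →ₗ[R] M) := by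
      intro x hx
      obtain ⟨y, rfl⟩ := mymem_rsmul.mp hx
      refine Submodule.mem_comap.mpr (mymem_rsmul.mpr ⟨r ^ (k + 1) • y, ?_⟩)
      simp only [LinearMap.id_apply, smul_smul, hps]
    set f : QuotSMulTop (r ^ (k + 1)) M →ₗ[R] QuotSMulTop (r ^ (k + 2)) M :=
      Submodule.mapQ _ _ (LinearMap.lsmul R M r) hcomap1 with hf_def
    set g : QuotSMulTop (r ^ (k + 2)) M →ₗ[R] QuotSMulTop r M :=
      Submodule.mapQ _ _ LinearMap.id hcomap2 with hg_def
    have hf : Function.Injective f := by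
      intro x y hxy
      obtain ⟨a, rfl⟩ := Submodule.Quotient.mk_surjective _ x
      obtain ⟨b, rfl⟩ := Submodule.Quotient.mk_surjective _ y
      rw [hf_def, Submodule.mapQ_apply, Submodule.mapQ_apply] at hxy
      have hmem := (Submodule.Quotient.eq _).mp hxy
      obtain ⟨c, hc⟩ := mymem_rsmul.mp hmem
      have hc' : r ^ (k + 2) • c = r • a - r • b := by
        simpa only [LinearMap.lsmul_apply] using hc
      have hkey : r • (a - b) = r • (r ^ (k + 1) • c) := by
        calc r • (a - b) = r • a - r • b := smul_sub r a b
          _ = r ^ (k + 2) • c := hc'.symm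
          _ = (r * r ^ (k + 1)) • c := by rw [hps]
          _ = r • r ^ (k + 1) • c := (smul_smul r _ c).symm
      have hab : a - b = r ^ (k + 1) • c := hr hkey
      refine (Submodule.Quotient.eq _).mpr ?_
      exact mymem_rsmul.mpr ⟨c, hab.symm⟩
    have hg : Function.Surjective g := by
      intro c
      obtain ⟨a, rfl⟩ := Submodule.Quotient.mk_surjective _ c
      exact ⟨Submodule.Quotient.mk a, by rw [hg_def, Submodule.mapQ_apply]; rfl⟩
    have hfg : Function.Exact f g := by
      intro y
      obtain ⟨a, rfl⟩ := Submodule.Quotient.mk_surjective _ y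
      constructor
      · intro hy
        rw [hg_def, Submodule.mapQ_apply] at hy
        have ha : (a : M) ∈ (r • ⊤ : Submodule R M) := by
          simpa using (Submodule.Quotient.mk_eq_zero _).mp hy
        obtain ⟨b, rfl⟩ := mymem_rsmul.mp ha
        exact ⟨Submodule.Quotient.mk b, by rw [hf_def, Submodule.mapQ_apply]; rfl⟩
      · rintro ⟨z, hz⟩
        obtain ⟨b, rfl⟩ := Submodule.Quotient.mk_surjective _ z
        rw [hf_def, Submodule.mapQ_apply] at hz
        rw [hg_def, Submodule.mapQ_apply]
        have hmem := (Submodule.Quotient.eq _).mp hz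
        obtain ⟨c, hc⟩ := mymem_rsmul.mp hmem
        have hc' : r ^ (k + 2) • c = r • b - a := by
          simpa only [LinearMap.lsmul_apply] using hc
        refine (Submodule.Quotient.mk_eq_zero _).mpr ?_
        refine mymem_rsmul.mpr ⟨b - r ^ (k + 1) • c, ?_⟩
        have : r • (b - r ^ (k + 1) • c) = r • b - r ^ (k + 2) • c := by
          rw [smul_sub, smul_smul, ← hps]
        rw [this, hc']
        simp only [LinearMap.id_apply]
        abel
    exact myIsWeaklyRegular_of_ses rs f g hf hg hfg ihk h

lemma myIsWeaklyRegular_map_pow {rs : List R}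
    (h : IsWeaklyRegular M rs) (k : ℕ) :
    IsWeaklyRegular M (rs.map (· ^ (k + 1))) := by
  induction h with
  | nil N => simp
  | cons r rs h1 h2 ih =>
    rw [List.map_cons, isWeaklyRegular_cons_iff]
    exact ⟨h1.pow _, myQuot_pow h1 _ ih k⟩

end Pow

section FiltrationAux

variable {R : Type*} [CommRing R]

lemma myFiltration_antitone {I : ℕ → Ideal R} (hI : IsIdealFiltration I) : Antitone I :=
  antitone_nat_of_succ_le hI.2.1

lemma myFiltration_pow_mem {I : ℕ → Ideal R} (hI : IsIdealFiltration I) {x : R} {m : ℕ}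
    (hx : x ∈ I m) : ∀ k, x ^ k ∈ I (m * k)
  | 0 => by simp [hI.1]
  | (k + 1) => by
    have h1 : x ^ k * x ∈ I (m * k) * I m :=
      Ideal.mul_mem_mul (myFiltration_pow_mem hI hx k) hx
    have h2 := hI.2.2 (m * k) m h1
    rw [pow_succ, Nat.mul_succ]
    exact h2

lemma myIter_add {p : ℕ} {φ : R → R} (hφ : IsFrobeniusSplitting p φ) (e : ℕ) (a b : R) :
    φ^[e] (a + b) = φ^[e] a + φ^[e] b := by
  induction e generalizing a b with
  | zero => simp
  | succ e ih =>
    rw [Function.iterate_succ_apply, Function.iterate_succ_apply,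
      Function.iterate_succ_apply, hφ.1, ih]

lemma myIter_one {p : ℕ} {φ : R → R} (hφ : IsFrobeniusSplitting p φ) (e : ℕ) :
    φ^[e] 1 = 1 := by
  induction e with
  | zero => simp
  | succ e ih => rw [Function.iterate_succ_apply, hφ.2.2, ih]

lemma myIter_semilinear {p : ℕ} {φ : R → R} (hφ : IsFrobeniusSplitting p φ) (e : ℕ) (a b : R) :
    φ^[e] (a ^ p ^ e * b) = a * φ^[e] b := by
  induction e generalizing a b with
  | zero => simp
  | succ e ih =>
    have h1 : a ^ p ^ (e + 1) = (a ^ p ^ e) ^ p := by rw [← pow_mul, pow_succ]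
    rw [Function.iterate_succ_apply, h1, hφ.2.1, ih, ← Function.iterate_succ_apply]

lemma myIter_pow {p : ℕ} {φ : R → R} (hφ : IsFrobeniusSplitting p φ) (e : ℕ) (x : R) :
    φ^[e] (x ^ p ^ e) = x := by
  have h := myIter_semilinear hφ e x 1
  rwa [mul_one, myIter_one hφ e, mul_one] at h

lemma myStep_mem {p : ℕ} (hp : 0 < p) {φ : R → R} {I : ℕ → Ideal R} (hfil : IsIdealFiltration I)
    (hmap : ∀ n : ℕ, ∀ x ∈ I (n * p + 1), φ x ∈ I (n + 1)) {n : ℕ} {x : R} (hx : x ∈ I n) :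
    φ x ∈ I ((n + p - 1) / p) := by
  cases n with
  | zero =>
    have h0 : (0 + p - 1) / p = 0 := Nat.div_eq_of_lt (by omega)
    rw [h0, hfil.1]
    trivial
  | succ m =>
    have h1 : m / p * p + 1 ≤ m + 1 := by
      have := Nat.div_mul_le_self m p; omega
    have h2 : x ∈ I (m / p * p + 1) := myFiltration_antitone hfil h1 hx
    have h3 := hmap (m / p) x h2
    have h4 : (m + 1 + p - 1) / p = m / p + 1 := by
      rw [show m + 1 + p - 1 = m + p by omega, Nat.add_div_right m hp]
    rw [h4]
    exact h3

lemma myIter_mem {p : ℕ} (hp : 0 < p) {φ : R → R} {I : ℕ → Ideal R} (hfil : IsIdealFiltration I)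
    (hmap : ∀ n : ℕ, ∀ x ∈ I (n * p + 1), φ x ∈ I (n + 1)) (e : ℕ) :
    ∀ {n : ℕ} {x : R}, x ∈ I n → φ^[e] x ∈ I ((n + p ^ e - 1) / p ^ e) := by
  induction e with
  | zero => intro n x hx; simpa using hx
  | succ e ih =>
    intro n x hx
    have h1 := myStep_mem hp hfil hmap hx
    have h2 := ih h1
    rw [Function.iterate_succ_apply]
    have h3 : ((n + p - 1) / p + p ^ e - 1) / p ^ e = (n + p ^ (e + 1) - 1) / p ^ (e + 1) := by
      rw [myCeilDiv_ceilDiv hp (pow_pos hp e), ← pow_succ']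
    rw [← h3]
    exact h2

end FiltrationAux

section FrobTwistSec

variable {R : Type*} [CommRing R]

/-- Frobenius twist of a module: same additive group, scalars act through `f`. -/
def MyFrobTwist (_f : R →+* R) (M : Type*) : Type _ := M

def MyFrobTwist.mk (f : R →+* R) {M : Type*} (x : M) : MyFrobTwist f M := x

def MyFrobTwist.get {f : R →+* R} {M : Type*} (x : MyFrobTwist f M) : M := x

instance {f : R →+* R} {M : Type*} [AddCommGroup M] : AddCommGroup (MyFrobTwist f M) :=
  inferInstanceAs (AddCommGroup M)

instance {f : R →+* R} {M : Type*} [AddCommGroup M] [Module R M] :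
    Module R (MyFrobTwist f M) :=
  Module.compHom M f

lemma MyFrobTwist.smul_def {f : R →+* R} {M : Type*} [AddCommGroup M] [Module R M]
    (r : R) (x : MyFrobTwist f M) : r • x = MyFrobTwist.mk f (f r • x.get) := rfl

def MyFrobTwist.addEquiv {f : R →+* R} {M : Type*} [AddCommGroup M] :
    MyFrobTwist f M ≃+ M where
  toFun := MyFrobTwist.get
  invFun := MyFrobTwist.mk f
  left_inv _ := rfl
  right_inv _ := rfl
  map_add' _ _ := rfl

open RingTheory.Sequence in
lemma myTwist_isWeaklyRegular {f : R →+* R} {M : Type*} [AddCommGroup M] [Module R M]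
    {rs : List R} (h : IsWeaklyRegular M (rs.map (fun r => f r))) :
    IsWeaklyRegular (MyFrobTwist f M) rs := by
  refine (AddEquiv.isWeaklyRegular_congr (e := MyFrobTwist.addEquiv (f := f) (M := M)) ?_).mpr h
  exact List.forall₂_map_right_iff.mpr (List.forall₂_same.mpr fun r _ x => rfl)

end FrobTwistSec

end MyAux


/-- The depth of a module over a local ring: the supremum of lengths of regular sequences on
`M` contained in the maximal ideal. -/
noncomputable def localDepth (R : Type*) [CommRing R] [IsLocalRing R]
    (M : Type*) [AddCommGroup M] [Module R M] : ℕ∞ :=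
  sSup {n : ℕ∞ | ∃ rs : List R, (rs.length : ℕ∞) = n ∧
    (∀ r ∈ rs, r ∈ IsLocalRing.maximalIdeal R) ∧ RingTheory.Sequence.IsRegular M rs}

/-- For an `F`-pure filtration `{Iₙ}` on an `F`-finite `F`-pure Noetherian
local ring of characteristic `p`, `depth(Iₙ) ≤ depth(I_{⌈n/p^e⌉})` for all `n, e ≥ 0`. -/
theorem depth_le_of_fPureFiltration
    {R : Type*} [CommRing R] [IsLocalRing R] [IsNoetherianRing R]
    (p : ℕ) (hp : p.Prime) [CharP R p]
    (hFF : IsFFiniteRing p R) (hFP : IsFSplitRing p R)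
    (I : ℕ → Ideal R) (hI : IsFPureFiltration p I) (n e : ℕ) :
    localDepth R (I n) ≤ localDepth R (I ((n + p ^ e - 1) / p ^ e)) := by
  haveI : Fact p.Prime := ⟨hp⟩
  obtain ⟨hfil, φ, hφ, hmap⟩ := hI
  have hq0 : 0 < p ^ e := pow_pos hp.pos e
  apply sSup_le_sSup
  rintro k ⟨rs, hlen, hmax, hreg⟩
  refine ⟨rs, hlen, hmax, ?_⟩
  have hWR : RingTheory.Sequence.IsWeaklyRegular (↥(I n)) rs := hreg.toIsWeaklyRegular
  obtain ⟨k', hk'⟩ : ∃ k', p ^ e = k' + 1 := ⟨p ^ e - 1, by omega⟩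
  have hWRpow : RingTheory.Sequence.IsWeaklyRegular (↥(I n)) (rs.map (· ^ p ^ e)) := by
    rw [hk']
    exact myIsWeaklyRegular_map_pow hWR k'
  set f : R →+* R := iterateFrobenius R p e with hf
  have hWRtwist : RingTheory.Sequence.IsWeaklyRegular (MyFrobTwist f (↥(I n))) rs := by
    apply myTwist_isWeaklyRegular
    have hmapeq : rs.map (fun r => f r) = rs.map (· ^ p ^ e) := by
      simp [hf, iterateFrobenius_def]
    rw [hmapeq]
    exact hWRpow
  set m1 := (n + p ^ e - 1) / p ^ e with hm1
  have hmem_i : ∀ x : R, x ∈ I m1 → x ^ p ^ e ∈ I n := fun x hx => by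
    have h1 : x ^ p ^ e ∈ I (m1 * p ^ e) := myFiltration_pow_mem hfil hx (p ^ e)
    have h2 : n ≤ m1 * p ^ e := myLe_ceilDiv_mul hq0
    exact myFiltration_antitone hfil h2 h1
  have hmem_pi : ∀ x : R, x ∈ I n → φ^[e] x ∈ I m1 := fun x hx =>
    myIter_mem hp.pos hfil hmap e hx
  let i : (↥(I m1)) →ₗ[R] MyFrobTwist f (↥(I n)) :=
    { toFun := fun x => MyFrobTwist.mk f ⟨(x : R) ^ p ^ e, hmem_i x x.2⟩
      map_add' := fun x y => by
        refine congrArg (MyFrobTwist.mk f) (Subtype.ext ?_)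
        show ((x : R) + (y : R)) ^ p ^ e = (x : R) ^ p ^ e + (y : R) ^ p ^ e
        exact add_pow_char_pow _ _ _ _
      map_smul' := fun r x => by
        refine congrArg (MyFrobTwist.mk f) (Subtype.ext ?_)
        show (r * (x : R)) ^ p ^ e = f r * (x : R) ^ p ^ e
        rw [mul_pow, hf, iterateFrobenius_def] }
  let pi : MyFrobTwist f (↥(I n)) →ₗ[R] (↥(I m1)) :=
    { toFun := fun y => ⟨φ^[e] ((y.get : R)), hmem_pi _ y.get.2⟩
      map_add' := fun x y => Subtype.ext (by
        show φ^[e] ((x.get : R) + (y.get : R)) = φ^[e] (x.get : R) + φ^[e] (y.get : R)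
        exact myIter_add hφ e _ _)
      map_smul' := fun r y => Subtype.ext (by
        show φ^[e] ((f r * (y.get : R))) = r * φ^[e] (y.get : R)
        rw [hf, iterateFrobenius_def]
        exact myIter_semilinear hφ e r _) }
  have hpi_i : pi ∘ₗ i = LinearMap.id := by
    refine LinearMap.ext fun x => Subtype.ext ?_
    show φ^[e] ((x : R) ^ p ^ e) = (x : R)
    exact myIter_pow hφ e _
  have hWRN : RingTheory.Sequence.IsWeaklyRegular (↥(I m1)) rs :=
    myIsWeaklyRegular_of_retract rs i pi hpi_i hWRtwist
  haveI hNT : Nontrivial (↥(I n)) := hreg.nontrivial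
  have hle : I n ≤ I m1 := by
    refine myFiltration_antitone hfil ?_
    rw [hm1, myCeilDiv_le_iff hq0]
    exact Nat.le_mul_of_pos_right n hq0
  haveI : Nontrivial (↥(I m1)) := by
    rw [Submodule.nontrivial_iff_ne_bot] at hNT ⊢
    intro hbot
    exact hNT (le_bot_iff.mp (hbot ▸ hle))
  haveI : Module.Finite R (↥(I m1)) := Module.Finite.iff_fg.mpr (IsNoetherian.noetherian _)
  exact (IsLocalRing.isRegular_iff_isWeaklyRegular_of_subset_maximalIdeal hmax).mpr hWRN
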